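/- Let A, B, C be three affinely independent points in the Euclidean plane. Then there exists an affine map f : ℝ² →ᵃ[ℝ] ℝ such that V(P) = f(P) for every point P in the convex hull of {A, B, C}, where V is the distance sum function of the triangle. (Consequently the triangle is divided into parallel line segments, namely the level sets of f, on which V is constant.) -/

import Mathlib

noncomputable section
open Metric RealInnerProductSpace

/-- The point `(x, y)` of the Euclidean plane `ℝ²`. -/
def pt (x y : ℝ) : EuclideanSpace ℝ (Fin 2) :=
  (WithLp.equiv 2 (Fin 2 → ℝ)).symm ![x, y]

/-- The line through `X` and `Y`, i.e. the affine span of `{X, Y}`, as a set. -/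
def lineThrough (X Y : EuclideanSpace ℝ (Fin 2)) : Set (EuclideanSpace ℝ (Fin 2)) :=
  (affineSpan ℝ {X, Y} : AffineSubspace ℝ (EuclideanSpace ℝ (Fin 2)))

/-- The distance sum function of the triangle `ABC`:
`V(P) = dist(P, line BC) + dist(P, line CA) + dist(P, line AB)`. -/
def vSum (A B C P : EuclideanSpace ℝ (Fin 2)) : ℝ :=
  Metric.infDist P (lineThrough B C) + Metric.infDist P (lineThrough C A) +
    Metric.infDist P (lineThrough A B)

/-- The squared-distance sum function of the triangle `ABC`:
`W(P) = dist(P, line BC)² + dist(P, line CA)² + dist(P, line AB)²`. -/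
def wSum (A B C P : EuclideanSpace ℝ (Fin 2)) : ℝ :=
  Metric.infDist P (lineThrough B C) ^ 2 + Metric.infDist P (lineThrough C A) ^ 2 +
    Metric.infDist P (lineThrough A B) ^ 2

abbrev E2 := EuclideanSpace ℝ (Fin 2)

def rot (v : E2) : E2 := (WithLp.equiv 2 (Fin 2 → ℝ)).symm ![-(v 1), v 0]

@[simp] lemma rot_apply0 (v : E2) : rot v 0 = -(v 1) := rfl
@[simp] lemma rot_apply1 (v : E2) : rot v 1 = v 0 := rfl

lemma inner_coords (v w : E2) : ⟪v, w⟫ = v 0 * w 0 + v 1 * w 1 := by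
  simp [PiLp.inner_apply, Fin.sum_univ_two, RCLike.inner_apply]; ring

lemma inner_rot_self (v : E2) : ⟪v, rot v⟫ = 0 := by
  simp [inner_coords]; ring

lemma norm_rot (v : E2) : ‖rot v‖ = ‖v‖ := by
  rw [← Real.sqrt_sq (norm_nonneg (rot v)), ← Real.sqrt_sq (norm_nonneg v),
    ← real_inner_self_eq_norm_sq, ← real_inner_self_eq_norm_sq]
  simp only [inner_coords, rot_apply0, rot_apply1]; ring_nf

lemma mem_line_iff (B C Q : E2) :
    Q ∈ lineThrough B C ↔ ∃ r : ℝ, r • (C - B) + B = Q := by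
  constructor
  · intro hQ
    have : (Q - B) +ᵥ B ∈ line[ℝ, B, C] := by simpa [lineThrough] using hQ
    rcases (vadd_left_mem_affineSpan_pair).mp this with ⟨r, hr⟩
    exact ⟨r, by simp only [vsub_eq_sub] at hr; rw [hr]; abel⟩
  · rintro ⟨r, rfl⟩
    have := smul_vsub_vadd_mem_affineSpan_pair r B C
    simpa [lineThrough] using this

lemma infDist_line (B C P : E2) (h : C ≠ B) :
    Metric.infDist P (lineThrough B C) = |⟪P - B, rot (C - B)⟫| / ‖C - B‖ := by
  set u : E2 := C - B with hu
  have hu0 : u ≠ 0 := sub_ne_zero.mpr h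
  have hnu : ‖u‖ ≠ 0 := norm_ne_zero_iff.mpr hu0
  have hnu2 : u 0 ^ 2 + u 1 ^ 2 ≠ 0 := by
    have h2 : ‖u‖ ^ 2 = u 0 ^ 2 + u 1 ^ 2 := by
      rw [← real_inner_self_eq_norm_sq, inner_coords]; ring
    rw [← h2]
    exact pow_ne_zero 2 hnu
  have hne : (lineThrough B C).Nonempty :=
    ⟨B, (mem_line_iff B C B).mpr ⟨0, by simp⟩⟩
  apply le_antisymm
  · -- upper bound via the foot of the perpendicular
    set s : ℝ := ⟪P - B, u⟫ / (u 0 ^ 2 + u 1 ^ 2) with hs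
    have hmem : s • u + B ∈ lineThrough B C := (mem_line_iff B C _).mpr ⟨s, rfl⟩
    have hle := Metric.infDist_le_dist_of_mem (x := P) hmem
    refine hle.trans (le_of_eq ?_)
    rw [dist_eq_norm]
    have nsq : ∀ x : E2, ‖x‖ ^ 2 = x 0 ^ 2 + x 1 ^ 2 := fun x => by
      rw [← real_inner_self_eq_norm_sq, inner_coords]; ring
    have hsq : ‖P - (s • u + B)‖ ^ 2 = (|⟪P - B, rot u⟫| / ‖u‖) ^ 2 := by
      rw [div_pow, sq_abs, nsq, nsq]
      have e0 : (P - (s • u + B)) 0 = (P 0 - B 0) - s * u 0 := by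
        simp [PiLp.sub_apply, PiLp.add_apply, PiLp.smul_apply, smul_eq_mul]; ring
      have e1 : (P - (s • u + B)) 1 = (P 1 - B 1) - s * u 1 := by
        simp [PiLp.sub_apply, PiLp.add_apply, PiLp.smul_apply, smul_eq_mul]; ring
      rw [e0, e1]
      simp only [PiLp.sub_apply, rot_apply0, rot_apply1, hs, inner_coords]
      field_simp
      ring
    have h1 : (0:ℝ) ≤ ‖P - (s • u + B)‖ := norm_nonneg _
    have h2 : (0:ℝ) ≤ |⟪P - B, rot u⟫| / ‖u‖ := by positivity
    nlinarith [hsq, h1, h2]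
  · rw [← not_lt]
    intro hlt
    rcases (Metric.infDist_lt_iff hne).mp hlt with ⟨Q, hQ, hd⟩
    rcases (mem_line_iff B C Q).mp hQ with ⟨r, rfl⟩
    rw [dist_eq_norm] at hd
    refine absurd hd (not_lt.mpr ?_)
    have key : ⟪P - (r • u + B), rot u⟫ = ⟪P - B, rot u⟫ := by
      have : P - (r • u + B) = (P - B) - r • u := by abel
      rw [this, inner_sub_left, real_inner_smul_left, inner_rot_self]
      ring
    have hcs : |⟪P - (r • u + B), rot u⟫| ≤ ‖P - (r • u + B)‖ * ‖u‖ := by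
      calc |⟪P - (r • u + B), rot u⟫| ≤ ‖P - (r • u + B)‖ * ‖rot u‖ :=
            abs_real_inner_le_norm _ _
        _ = ‖P - (r • u + B)‖ * ‖u‖ := by rw [norm_rot]
    rw [key] at hcs
    rw [div_le_iff₀ (lt_of_le_of_ne (norm_nonneg u) (Ne.symm hnu))]
    exact hcs


lemma side_aux (B C A : E2) (h : C ≠ B) (n : E2)
    (hnC : ⟪C - B, n⟫ = 0) (hA : 0 ≤ ⟪A - B, n⟫)
    (hdist : ∀ P : E2, Metric.infDist P (lineThrough B C) = |⟪P - B, n⟫| / ‖C - B‖) :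
    ∃ f : E2 →ᵃ[ℝ] ℝ, 0 ≤ f A ∧ f B = 0 ∧ f C = 0 ∧
      ∀ P : E2, Metric.infDist P (lineThrough B C) = |f P| := by
  have hpos : (0:ℝ) < ‖C - B‖ := by
    rw [norm_pos_iff]; exact sub_ne_zero.mpr h
  refine ⟨(‖C - B‖)⁻¹ • ((innerₛₗ ℝ n).toAffineMap - AffineMap.const ℝ E2 (⟪n, B⟫)),
    ?_, ?_, ?_, ?_⟩
  all_goals
    simp only [AffineMap.coe_smul, AffineMap.coe_sub, AffineMap.coe_const,
      LinearMap.coe_toAffineMap, Pi.smul_apply, Pi.sub_apply, Function.const_apply,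
      innerₛₗ_apply_apply, smul_eq_mul]
  · have key : ⟪n, A⟫ - ⟪n, B⟫ = ⟪A - B, n⟫ := by
      rw [← inner_sub_right]; exact real_inner_comm _ _
    rw [key]
    positivity
  · ring
  · have key : ⟪n, C⟫ - ⟪n, B⟫ = ⟪C - B, n⟫ := by
      rw [← inner_sub_right]; exact real_inner_comm _ _
    rw [key, hnC, mul_zero]
  · intro P
    have key : ⟪n, P⟫ - ⟪n, B⟫ = ⟪P - B, n⟫ := by
      rw [← inner_sub_right]; exact real_inner_comm _ _
    rw [hdist P, key, abs_mul, abs_inv, abs_of_pos hpos, inv_mul_eq_div]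

lemma exists_affine_side (B C A : E2) (h : C ≠ B) :
    ∃ f : E2 →ᵃ[ℝ] ℝ, 0 ≤ f A ∧ f B = 0 ∧ f C = 0 ∧
      ∀ P : E2, Metric.infDist P (lineThrough B C) = |f P| := by
  rcases le_total 0 ⟪A - B, rot (C - B)⟫ with h1 | h1
  · exact side_aux B C A h (rot (C - B)) (inner_rot_self (C - B)) h1
      (fun P => infDist_line B C P h)
  · refine side_aux B C A h (-(rot (C - B))) ?_ ?_ ?_
    · rw [inner_neg_right, inner_rot_self]; ring
    · rw [inner_neg_right]; linarith
    · intro P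
      rw [inner_neg_right, abs_neg]
      exact infDist_line B C P h

lemma affine_nonneg_on_hull (f : E2 →ᵃ[ℝ] ℝ) (s : Set E2)
    (h : ∀ x ∈ s, 0 ≤ f x) : ∀ P ∈ convexHull ℝ s, 0 ≤ f P := by
  intro P hP
  have hmem : f P ∈ f '' (convexHull ℝ s) := ⟨P, hP, rfl⟩
  rw [AffineMap.image_convexHull] at hmem
  have hsub : convexHull ℝ (f '' s) ⊆ Set.Ici 0 := by
    apply convexHull_min _ (convex_Ici 0)
    rintro _ ⟨x, hx, rfl⟩
    exact h x hx
  exact hsub hmem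

theorem stmt_3_aux (A B C : E2)
    (hind : AffineIndependent ℝ ![A, B, C]) :
    ∃ f : E2 →ᵃ[ℝ] ℝ,
      ∀ P ∈ convexHull ℝ ({A, B, C} : Set E2),
        vSum A B C P = f P := by
  have hBC : C ≠ B := fun e =>
    absurd (hind.injective (show ![A, B, C] 2 = ![A, B, C] 1 by simpa using e))
      (by decide)
  have hCA : A ≠ C := fun e =>
    absurd (hind.injective (show ![A, B, C] 0 = ![A, B, C] 2 by simpa using e))
      (by decide)
  have hAB : B ≠ A := fun e =>
    absurd (hind.injective (show ![A, B, C] 1 = ![A, B, C] 0 by simpa using e))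
      (by decide)
  obtain ⟨f₁, hA1, hB1, hC1, hd1⟩ := exists_affine_side B C A hBC
  obtain ⟨f₂, hB2, hC2, hA2, hd2⟩ := exists_affine_side C A B hCA
  obtain ⟨f₃, hC3, hA3, hB3, hd3⟩ := exists_affine_side A B C hAB
  refine ⟨f₁ + f₂ + f₃, ?_⟩
  intro P hP
  have h1 : 0 ≤ f₁ P := affine_nonneg_on_hull f₁ {A, B, C}
    (by rintro x (rfl | rfl | rfl) <;> simp [hA1, hB1, hC1]) P hP
  have h2 : 0 ≤ f₂ P := affine_nonneg_on_hull f₂ {A, B, C}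
    (by rintro x (rfl | rfl | rfl) <;> simp [hA2, hB2, hC2]) P hP
  have h3 : 0 ≤ f₃ P := affine_nonneg_on_hull f₃ {A, B, C}
    (by rintro x (rfl | rfl | rfl) <;> simp [hA3, hB3, hC3]) P hP
  have : vSum A B C P = f₁ P + f₂ P + f₃ P := by
    rw [vSum, hd1 P, hd2 P, hd3 P, abs_of_nonneg h1, abs_of_nonneg h2, abs_of_nonneg h3]
  rw [this]
  simp

/-- On the triangle, the distance sum function agrees with an affine map `ℝ² →ᵃ[ℝ] ℝ`. -/
theorem stmt_3 (A B C : EuclideanSpace ℝ (Fin 2))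
    (hind : AffineIndependent ℝ ![A, B, C]) :
    ∃ f : EuclideanSpace ℝ (Fin 2) →ᵃ[ℝ] ℝ,
      ∀ P ∈ convexHull ℝ ({A, B, C} : Set (EuclideanSpace ℝ (Fin 2))),
        vSum A B C P = f P := by
  exact stmt_3_aux A B C hind
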